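/- For a submodular monotone increasing function f on ground set E = U × I with f(∅) = 0, subject to the partition matroid constraint |P_u| ≤ N for each u, the locally greedy algorithm (processing users in arbitrary order and for each user greedily adding N elements from {u} × I maximizing marginal gain) returns a solution P with f(P) ≥ (1/2)·f(P*) where P* is an optimal solution. -/

import Mathlib

open Finset

section LGHelpers

lemma lgh_submod_union_bound {α : Type*} [DecidableEq α] (f : Finset α → ℝ)
    (hsub : ∀ A B : Finset α, A ⊆ B → ∀ x ∉ B,
      f (insert x B) - f B ≤ f (insert x A) - f A)
    (B T : Finset α) (hd : Disjoint T B) :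
    f (B ∪ T) ≤ f B + ∑ x ∈ T, (f (insert x B) - f B) := by
  have H : ∀ T : Finset α, Disjoint T B →
      f (B ∪ T) ≤ f B + ∑ x ∈ T, (f (insert x B) - f B) := by
    intro T
    induction T using Finset.induction_on with
    | empty => intro _; simp
    | @insert a s ha ih =>
      intro hd
      have hd' : Disjoint s B := hd.mono_left (Finset.subset_insert a s)
      have haB : a ∉ B := fun h => Finset.disjoint_left.mp hd (Finset.mem_insert_self a s) h
      have haBs : a ∉ B ∪ s := by simp [haB, ha]
      have h1 : f (insert a (B ∪ s)) - f (B ∪ s) ≤ f (insert a B) - f B :=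
        hsub B (B ∪ s) Finset.subset_union_left a haBs
      have h2 := ih hd'
      have he : B ∪ insert a s = insert a (B ∪ s) := by rw [Finset.union_insert]
      rw [he, Finset.sum_insert ha]
      linarith
  exact H T hd

lemma lgh_nodup_get_not_mem_take {α : Type*} {l : List α} (h : l.Nodup)
    (i : ℕ) (hi : i < l.length) : l.get ⟨i, hi⟩ ∉ l.take i := by
  intro hmem
  have hsplit := List.take_append_drop i l
  rw [← hsplit] at h
  rw [List.nodup_append] at h
  have hdrop : l.get ⟨i, hi⟩ ∈ l.drop i := by
    rw [List.get_eq_getElem, List.drop_eq_getElem_cons hi]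
    exact List.mem_cons_self
  exact h.2.2 _ hmem _ hdrop rfl

variable {U I : Type*} [DecidableEq U] [DecidableEq I]

def lghPref (us : List U) (pick : U → List I) (t : ℕ) : Finset (U × I) :=
  ((us.take t).flatMap fun s => (pick s).map fun i => (s, i)).toFinset

lemma lgh_mem_Pref {us : List U} {pick : U → List I} {t : ℕ} {x : U × I} :
    x ∈ lghPref us pick t ↔ x.1 ∈ us.take t ∧ x.2 ∈ pick x.1 := by
  cases x with
  | mk u j =>
    simp only [lghPref, List.mem_toFinset, List.mem_flatMap, List.mem_map, Prod.mk.injEq]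
    constructor
    · rintro ⟨a, ha, i, hi, rfl, rfl⟩; exact ⟨ha, hi⟩
    · rintro ⟨ha, hi⟩; exact ⟨u, ha, j, hi, rfl, rfl⟩

def lghS (us : List U) (pick : U → List I) (t k : ℕ) : Finset (U × I) :=
  lghPref us pick t ∪
    if ht : t < us.length then
      (((pick (us.get ⟨t, ht⟩)).take k).map fun i => (us.get ⟨t, ht⟩, i)).toFinset
    else ∅

lemma lghS_zero {us : List U} {pick : U → List I} (t : ℕ) :
    lghS us pick t 0 = lghPref us pick t := by
  unfold lghS; split <;> simp

lemma lgh_mem_S {us : List U} {pick : U → List I} {t k : ℕ} {x : U × I}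
    (hx : x ∈ lghS us pick t k) : x.1 ∈ us ∧ x.2 ∈ pick x.1 := by
  unfold lghS at hx
  rcases Finset.mem_union.mp hx with h | h
  · rw [lgh_mem_Pref] at h
    exact ⟨List.take_subset t us h.1, h.2⟩
  · split at h
    · rename_i ht
      rcases List.mem_map.mp (List.mem_toFinset.mp h) with ⟨i, hi, rfl⟩
      exact ⟨List.get_mem us ⟨t, ht⟩, List.take_subset _ _ hi⟩
    · simp at h

lemma lghS_succ {us : List U} {pick : U → List I} {t k : ℕ} (ht : t < us.length)
    (hk : k < (pick (us.get ⟨t, ht⟩)).length) :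
    lghS us pick t (k + 1) =
      insert (us.get ⟨t, ht⟩, (pick (us.get ⟨t, ht⟩)).get ⟨k, hk⟩)
        (lghS us pick t k) := by
  unfold lghS
  rw [dif_pos ht, dif_pos ht, List.take_succ, List.getElem?_eq_getElem hk]
  simp only [Option.toList_some, List.map_append, List.toFinset_append, List.map_cons,
    List.map_nil, List.toFinset_cons, List.toFinset_nil, List.get_eq_getElem]
  ext x
  simp only [Finset.mem_union, Finset.mem_insert, Finset.notMem_empty]
  tauto

lemma lghS_top {us : List U} {pick : U → List I} {t : ℕ} (ht : t < us.length) :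
    lghS us pick t ((pick (us.get ⟨t, ht⟩)).length) = lghPref us pick (t + 1) := by
  unfold lghS lghPref
  rw [dif_pos ht, List.take_length]
  conv_rhs => rw [List.take_succ, List.getElem?_eq_getElem ht]
  simp only [Option.toList_some, List.flatMap_append, List.flatMap_cons, List.flatMap_nil,
    List.append_nil, List.toFinset_append, List.get_eq_getElem]

end LGHelpers

/-- Fisher–Nemhauser–Wolsey: the locally greedy algorithm on a partition matroid
(process users in some order `us`; for each user greedily add N pairs from
{u} × I maximizing marginal gain) is a 1/2-approximation for maximizing a
submodular monotone increasing function f with f(∅) = 0, subject to the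
constraint that each user receives at most N items. -/
theorem locally_greedy_half_approx {U I : Type*} [Fintype U] [Fintype I]
    [DecidableEq U] [DecidableEq I]
    (f : Finset (U × I) → ℝ) (N : ℕ) (hN : N ≤ Fintype.card I)
    (hmono : ∀ A B : Finset (U × I), A ⊆ B → f A ≤ f B)
    (hsub : ∀ A B : Finset (U × I), A ⊆ B → ∀ x ∉ B,
      f (insert x B) - f B ≤ f (insert x A) - f A)
    (hempty : f ∅ = 0)
    (us : List U) (husnd : us.Nodup) (husall : ∀ u : U, u ∈ us)
    (pick : U → List I)
    (hlen : ∀ u, (pick u).length = N)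
    (hpick : ∀ u, (pick u).Nodup)
    (hgreedy : ∀ (t : ℕ) (ht : t < us.length) (k : ℕ) (hk : k < N) (j : I),
      j ∉ (pick (us.get ⟨t, ht⟩)).take k →
      f (insert (us.get ⟨t, ht⟩, j)
          (((us.take t).flatMap fun s => (pick s).map fun i => (s, i)).toFinset ∪
           (((pick (us.get ⟨t, ht⟩)).take k).map
             fun i => (us.get ⟨t, ht⟩, i)).toFinset)) -
        f ((((us.take t).flatMap fun s => (pick s).map fun i => (s, i)).toFinset ∪
           (((pick (us.get ⟨t, ht⟩)).take k).map
             fun i => (us.get ⟨t, ht⟩, i)).toFinset)) ≤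
      f (insert (us.get ⟨t, ht⟩,
            (pick (us.get ⟨t, ht⟩)).get ⟨k, (hlen (us.get ⟨t, ht⟩)).symm ▸ hk⟩)
          (((us.take t).flatMap fun s => (pick s).map fun i => (s, i)).toFinset ∪
           (((pick (us.get ⟨t, ht⟩)).take k).map
             fun i => (us.get ⟨t, ht⟩, i)).toFinset)) -
        f ((((us.take t).flatMap fun s => (pick s).map fun i => (s, i)).toFinset ∪
           (((pick (us.get ⟨t, ht⟩)).take k).map
             fun i => (us.get ⟨t, ht⟩, i)).toFinset))) :
    ∀ Q : Finset (U × I), (∀ u : U, (Q.filter fun p => p.1 = u).card ≤ N) →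
      f Q ≤ 2 * f ((us.flatMap fun u => (pick u).map fun i => (u, i)).toFinset) := by
  intro Q hQ
  set G : Finset (U × I) := (us.flatMap fun u => (pick u).map fun i => (u, i)).toFinset with hG
  have hGP : G = lghPref us pick us.length := by rw [hG, lghPref, List.take_length]
  have memG : ∀ x : U × I, x ∈ G ↔ x.2 ∈ pick x.1 := by
    intro x
    rw [hGP, lgh_mem_Pref, List.take_length]
    simp [husall x.1]
  set gain : ℕ → ℕ → ℝ :=
    fun t k => f (lghS us pick t (k + 1)) - f (lghS us pick t k) with hgain
  have hsubG : ∀ t k, lghS us pick t k ⊆ G := by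
    intro t k x hx
    rw [memG]
    exact (lgh_mem_S hx).2
  -- gain equals the greedy marginal, and dominates marginals of fresh elements
  have hmarg_le_gain : ∀ (t : ℕ) (ht : t < us.length) (k : ℕ) (hk : k < N) (j : I),
      j ∉ (pick (us.get ⟨t, ht⟩)).take k →
      f (insert (us.get ⟨t, ht⟩, j) (lghS us pick t k)) - f (lghS us pick t k) ≤ gain t k := by
    intro t ht k hk j hj
    have h := hgreedy t ht k hk j hj
    have e1 : lghS us pick t k =
        ((us.take t).flatMap fun s => (pick s).map fun i => (s, i)).toFinset ∪
          (((pick (us.get ⟨t, ht⟩)).take k).map fun i => (us.get ⟨t, ht⟩, i)).toFinset := by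
      unfold lghS lghPref
      rw [dif_pos ht]
    have e2 : lghS us pick t (k + 1) =
        insert (us.get ⟨t, ht⟩,
            (pick (us.get ⟨t, ht⟩)).get ⟨k, (hlen (us.get ⟨t, ht⟩)).symm ▸ hk⟩)
          (lghS us pick t k) := lghS_succ ht _
    rw [← e1] at h
    rw [hgain]
    simp only [e2]
    exact h
  have hgain_nonneg : ∀ (t : ℕ), t < us.length → ∀ (k : ℕ), k < N → 0 ≤ gain t k := by
    intro t ht k hk
    obtain ⟨j, hj⟩ : ∃ j : I, j ∉ (pick (us.get ⟨t, ht⟩)).take k := by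
      by_contra hcon
      push_neg at hcon
      have h1 : (Finset.univ : Finset I) ⊆ ((pick (us.get ⟨t, ht⟩)).take k).toFinset :=
        fun j _ => List.mem_toFinset.mpr (hcon j)
      have h2 := Finset.card_le_card h1
      rw [Finset.card_univ] at h2
      have h3 : ((pick (us.get ⟨t, ht⟩)).take k).toFinset.card ≤ k :=
        le_trans (List.toFinset_card_le _) (by simp [List.length_take])
      omega
    have h := hmarg_le_gain t ht k hk j hj
    have h0 : f (lghS us pick t k) ≤ f (insert (us.get ⟨t, ht⟩, j) (lghS us pick t k)) :=
      hmono _ _ (Finset.subset_insert _ _)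
    linarith
  -- telescoping: the gains sum to f G
  have htel : f G = ∑ t ∈ Finset.range us.length, ∑ k ∈ Finset.range N, gain t k := by
    have h1 : ∀ t ∈ Finset.range us.length,
        ∑ k ∈ Finset.range N, gain t k =
          f (lghPref us pick (t + 1)) - f (lghPref us pick t) := by
      intro t ht'
      have ht := Finset.mem_range.mp ht'
      have := Finset.sum_range_sub (fun k => f (lghS us pick t k)) N
      rw [hgain]
      rw [this]
      rw [← hlen (us.get ⟨t, ht⟩), lghS_top ht, lghS_zero]
    rw [Finset.sum_congr rfl h1,
      Finset.sum_range_sub (fun t => f (lghPref us pick t)) us.length]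
    have h0 : lghPref us pick 0 = ∅ := by simp [lghPref]
    rw [h0, hempty, ← hGP]
    ring
  -- per-user charging
  have huser : ∀ u : U,
      ∑ x ∈ (Q \ G).filter (fun x => x.1 = u), (f (insert x G) - f G) ≤
        ∑ k ∈ Finset.range N, gain (us.idxOf u) k := by
    intro u
    have htu : us.idxOf u < us.length := List.idxOf_lt_length_iff.mpr (husall u)
    have hgetu : us.get ⟨us.idxOf u, htu⟩ = u := List.idxOf_get htu
    set t := us.idxOf u with htdef
    set R := (Q \ G).filter (fun x => x.1 = u) with hR
    have hRsub : R ⊆ Q.filter (fun p => p.1 = u) :=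
      Finset.filter_subset_filter _ Finset.sdiff_subset
    have hRcard : R.card ≤ N := le_trans (Finset.card_le_card hRsub) (hQ u)
    have hmQ : ∀ x ∈ R, ∀ k, k < N → f (insert x G) - f G ≤ gain t k := by
      intro x hx k hk
      rw [hR, Finset.mem_filter, Finset.mem_sdiff] at hx
      obtain ⟨⟨hxQ, hxG⟩, hx1⟩ := hx
      have hx2 : x.2 ∉ (pick u).take k := by
        intro hc
        apply hxG
        rw [memG, hx1]
        exact List.take_subset _ _ hc
      have step1 : f (insert x G) - f G ≤
          f (insert x (lghS us pick t k)) - f (lghS us pick t k) :=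
        hsub _ _ (hsubG t k) x hxG
      have step2 := hmarg_le_gain t htu k hk x.2 (by rw [hgetu]; exact hx2)
      have hxeq : (us.get ⟨t, htu⟩, x.2) = x := by
        rw [hgetu, ← hx1]
      rw [hxeq] at step2
      linarith
    rcases Finset.eq_empty_or_nonempty R with hRe | hRne
    · rw [hRe]
      simp only [Finset.sum_empty]
      exact Finset.sum_nonneg fun k hk => hgain_nonneg t htu k (Finset.mem_range.mp hk)
    · have hN0 : 0 < N := lt_of_lt_of_le (Finset.card_pos.mpr hRne) hRcard
      obtain ⟨k₀, hk₀, hmin⟩ :=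
        Finset.exists_min_image (Finset.range N) (gain t) ⟨0, Finset.mem_range.mpr hN0⟩
      have hk₀N := Finset.mem_range.mp hk₀
      have h1 : ∑ x ∈ R, (f (insert x G) - f G) ≤ R.card • gain t k₀ :=
        Finset.sum_le_card_nsmul R _ _ (fun x hx => hmQ x hx k₀ hk₀N)
      have h2 : (N : ℝ) * gain t k₀ ≤ ∑ k ∈ Finset.range N, gain t k := by
        have := Finset.card_nsmul_le_sum (Finset.range N) (gain t) (gain t k₀)
          (fun k hk => hmin k hk)
        simpa [nsmul_eq_mul] using this
      have hg0 := hgain_nonneg t htu k₀ hk₀N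
      have h3 : (R.card : ℝ) * gain t k₀ ≤ (N : ℝ) * gain t k₀ :=
        mul_le_mul_of_nonneg_right (by exact_mod_cast hRcard) hg0
      calc ∑ x ∈ R, (f (insert x G) - f G) ≤ R.card • gain t k₀ := h1
        _ = (R.card : ℝ) * gain t k₀ := by rw [nsmul_eq_mul]
        _ ≤ (N : ℝ) * gain t k₀ := h3
        _ ≤ ∑ k ∈ Finset.range N, gain t k := h2
  -- reindex the per-user sums
  have hreindex : ∑ u : U, ∑ k ∈ Finset.range N, gain (us.idxOf u) k =
      ∑ t ∈ Finset.range us.length, ∑ k ∈ Finset.range N, gain t k := by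
    refine Finset.sum_bij' (fun u _ => us.idxOf u)
      (fun t ht => us.get ⟨t, Finset.mem_range.mp ht⟩)
      (fun u _ => Finset.mem_range.mpr (List.idxOf_lt_length_iff.mpr (husall u)))
      (fun t _ => Finset.mem_univ _)
      (fun u _ => List.idxOf_get _)
      (fun t ht => ?_) (fun u _ => rfl)
    have h := List.idxOf_get (l := us)
      (a := us.get ⟨t, Finset.mem_range.mp ht⟩)
      (List.idxOf_lt_length_iff.mpr (List.get_mem us ⟨t, Finset.mem_range.mp ht⟩))
    have h2 := (husnd.get_inj_iff).mp h
    exact congrArg Fin.val h2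
  -- assemble
  have hQG : f Q ≤ f (Q ∪ G) := hmono _ _ Finset.subset_union_left
  have hbound := lgh_submod_union_bound f hsub G (Q \ G) Finset.sdiff_disjoint
  have hunion : G ∪ (Q \ G) = Q ∪ G := by
    rw [Finset.union_sdiff_self_eq_union, Finset.union_comm]
  rw [hunion] at hbound
  have hfib := Finset.sum_fiberwise (Q \ G) (fun x => x.1)
    (fun x => f (insert x G) - f G)
  have hsumle : ∑ x ∈ Q \ G, (f (insert x G) - f G) ≤ f G := by
    rw [← hfib]
    calc ∑ u : U, ∑ x ∈ (Q \ G).filter (fun x => x.1 = u), (f (insert x G) - f G)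
        ≤ ∑ u : U, ∑ k ∈ Finset.range N, gain (us.idxOf u) k :=
          Finset.sum_le_sum fun u _ => huser u
      _ = ∑ t ∈ Finset.range us.length, ∑ k ∈ Finset.range N, gain t k := hreindex
      _ = f G := htel.symm
  linarith
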